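/- Let q be even and c ∈ F_q such that x^2 + x + c is irreducible over F_q. Then f(x) = x^2 + x + c is invariant under [H_1] and [H_2] where H_1 = [[1,0],[1,1]] and H_2 = [[0,1],[c,1]], and the subgroup of PGL_2(F_q) generated by [H_1], [H_2] is noncyclic. -/
import Mathlib


open Polynomial

variable {F : Type*} [Field F] [Fintype F]

/-- For `A = [[a,b],[c,d]]`, the polynomial `A ∘ f = (bX+d)^k f((aX+c)/(bX+d))`,
where `k = natDegree f`. -/
noncomputable def mobApply (A : Matrix (Fin 2) (Fin 2) F) (f : F[X]) : F[X] :=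
  ∑ i ∈ Finset.range (f.natDegree + 1),
    C (f.coeff i) * (C (A 0 0) * X + C (A 1 0)) ^ i *
      (C (A 0 1) * X + C (A 1 1)) ^ (f.natDegree - i)

/-- The monic normalization `[A] ∘ f` of `A ∘ f`. -/
noncomputable def mobAct (A : Matrix (Fin 2) (Fin 2) F) (f : F[X]) : F[X] :=
  C (mobApply A f).leadingCoeff⁻¹ * mobApply A f

/-- The projective general linear group `PGL₂(F)`, as the quotient of `GL₂(F)` by
its center (the scalar matrices). -/
abbrev PGL2 (F : Type*) [Field F] : Type _ :=
  GL (Fin 2) F ⧸ Subgroup.center (GL (Fin 2) F)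

theorem quadratic_invariant_noncyclic_even (hq : Even (Fintype.card F)) (c : F)
    (hc : Irreducible (X ^ 2 + X + C c)) :
    mobAct (!![1, 0; 1, 1] : Matrix (Fin 2) (Fin 2) F) (X ^ 2 + X + C c) = X ^ 2 + X + C c ∧
    mobAct (!![0, 1; c, 1] : Matrix (Fin 2) (Fin 2) F) (X ^ 2 + X + C c) = X ^ 2 + X + C c ∧
    ∃ (h₁ : IsUnit (!![1, 0; 1, 1] : Matrix (Fin 2) (Fin 2) F))
      (h₂ : IsUnit (!![0, 1; c, 1] : Matrix (Fin 2) (Fin 2) F)),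
      ¬IsCyclic (Subgroup.closure
        ({(h₁.unit : PGL2 F), (h₂.unit : PGL2 F)} : Set (PGL2 F))) := by
  haveI hchar : CharP F 2 := by
    have h := (FiniteField.even_card_iff_char_two).mpr (Nat.even_iff.mp hq)
    exact h ▸ ringChar.charP F
  -- c ≠ 0
  have hc0 : c ≠ 0 := by
    rintro rfl
    have hfac : (X ^ 2 + X + C (0:F)) = X * (X + 1) := by
      simp only [map_zero, add_zero]; ring
    rcases hc.isUnit_or_isUnit hfac with h | h
    · exact Polynomial.not_isUnit_X h
    · have := Polynomial.natDegree_eq_zero_of_isUnit h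
      have h1 : ((X : F[X]) + 1).natDegree = 1 := by compute_degree!
      omega
  have hd : (X^2 + X + C c : F[X]).natDegree = 2 := by compute_degree!
  have hmonic : (X^2 + X + C c : F[X]).Monic := by monicity!
  have h2 : (2:F[X]) = 0 := by
    have := CharP.cast_eq_zero F[X] 2; simpa using this
  -- first invariance
  have hm1 : mobApply (!![1, 0; 1, 1] : Matrix (Fin 2) (Fin 2) F) (X ^ 2 + X + C c)
      = X ^ 2 + X + C c := by
    rw [mobApply, hd]
    rw [Finset.sum_range_succ, Finset.sum_range_succ, Finset.sum_range_succ,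
      Finset.sum_range_zero]
    simp [coeff_add, coeff_X_pow, coeff_X, coeff_C]
    linear_combination (norm := ring_nf) (X + 1) * h2
  have hm2 : mobApply (!![0, 1; c, 1] : Matrix (Fin 2) (Fin 2) F) (X ^ 2 + X + C c)
      = C c * (X ^ 2 + X + C c) := by
    rw [mobApply, hd]
    rw [Finset.sum_range_succ, Finset.sum_range_succ, Finset.sum_range_succ,
      Finset.sum_range_zero]
    simp [coeff_add, coeff_X_pow, coeff_X, coeff_C]
    linear_combination (norm := ring_nf) (C c * X + C c) * h2
  refine ⟨?_, ?_, ?_⟩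
  · rw [mobAct, hm1, hmonic.leadingCoeff, inv_one, map_one, one_mul]
  · rw [mobAct, hm2, leadingCoeff_mul, leadingCoeff_C, hmonic.leadingCoeff, mul_one,
      ← mul_assoc, ← map_mul, inv_mul_cancel₀ hc0, map_one, one_mul]
  -- group-theoretic part
  have hdet1 : IsUnit (!![1, 0; 1, 1] : Matrix (Fin 2) (Fin 2) F) := by
    rw [Matrix.isUnit_iff_isUnit_det, Matrix.det_fin_two_of]
    simp
  have hdet2 : IsUnit (!![0, 1; c, 1] : Matrix (Fin 2) (Fin 2) F) := by
    rw [Matrix.isUnit_iff_isUnit_det, Matrix.det_fin_two_of]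
    simpa [isUnit_iff_ne_zero] using hc0
  refine ⟨hdet1, hdet2, ?_⟩
  intro hcyc
  set S : Set (PGL2 F) := {(hdet1.unit : PGL2 F), (hdet2.unit : PGL2 F)} with hS
  have hx : (hdet1.unit : PGL2 F) ∈ Subgroup.closure S := Subgroup.subset_closure (by left; rfl)
  have hy : (hdet2.unit : PGL2 F) ∈ Subgroup.closure S := Subgroup.subset_closure (by right; rfl)
  letI := hcyc.commGroup
  have hcomm : (⟨_, hx⟩ : Subgroup.closure S) * ⟨_, hy⟩ = ⟨_, hy⟩ * ⟨_, hx⟩ := mul_comm _ _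
  have hcomm' : (hdet1.unit : PGL2 F) * (hdet2.unit : PGL2 F)
      = (hdet2.unit : PGL2 F) * (hdet1.unit : PGL2 F) := congrArg Subtype.val hcomm
  rw [← QuotientGroup.mk_mul, ← QuotientGroup.mk_mul] at hcomm'
  have hz := (QuotientGroup.eq (s := Subgroup.center (GL (Fin 2) F))).mp hcomm'
  have hza := (Subgroup.mem_center_iff.mp hz) hdet1.unit
  have hmat := congrArg Units.val hza
  simp only [Units.val_mul, Matrix.coe_units_inv, IsUnit.unit_spec] at hmat
  have hN : (!![1,0;1,1] : Matrix (Fin 2) (Fin 2) F) * !![0,1;c,1] = !![0,1;c,0] := by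
    ext i j; fin_cases i <;> fin_cases j <;>
      simp [Matrix.mul_apply, Fin.sum_univ_two, CharTwo.add_self_eq_zero]
  have hNinv : (!![0,1;c,0] : Matrix (Fin 2) (Fin 2) F)⁻¹ = !![0, c⁻¹; 1, 0] := by
    apply Matrix.inv_eq_right_inv
    ext i j; fin_cases i <;> fin_cases j <;>
      simp [Matrix.mul_apply, Fin.sum_univ_two, mul_inv_cancel₀ hc0]
  rw [hN, hNinv] at hmat
  have h10 := congrFun (congrFun hmat 1) 0
  simp [Matrix.mul_apply, Fin.sum_univ_two, CharTwo.add_self_eq_zero] at h10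
  have h2' : (1:F) + 1 = 0 := CharTwo.add_self_eq_zero 1
  rw [mul_add, inv_mul_cancel₀ hc0, mul_one] at h10
  have hinv : c⁻¹ = 0 := by linear_combination h10 - h2'
  exact hc0 (inv_eq_zero.mp hinv)
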